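/- Let α > 0, let t(x) = α‖x‖² for x ∈ ℝⁿ (with the Euclidean norm), let T = {(x, α‖x‖²) : x ∈ ℝⁿ} ⊆ ℝⁿ × ℝ (with the Euclidean product distance), and let (x̄, ȳ) ∈ ℝⁿ × ℝ with x̄ ≠ 0 and ȳ ≠ α‖x̄‖². Set Δ := (1 − 2αȳ)³/(216α⁶) + ‖x̄‖²/(16α⁴). If Δ ≥ 0, then the set of points of T nearest to (x̄, ȳ) is the singleton {(w₁·x̄/‖x̄‖, α·w₁²)}, where w₁ := ∛(‖x̄‖/(4α²) − √Δ) + ∛(‖x̄‖/(4α²) + √Δ), with ∛ denoting the real cube root. -/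

import Mathlib

open RealInnerProductSpace

/-- The real cube root. -/
noncomputable def cbrt (t : ℝ) : ℝ := Real.sign t * |t| ^ ((1 : ℝ) / 3)

lemma cbrt_cube (t : ℝ) : (cbrt t) ^ 3 = t := by
  have habs : (|t| ^ ((1:ℝ)/3)) ^ (3:ℕ) = |t| := by
    rw [← Real.rpow_natCast (|t| ^ ((1:ℝ)/3)) 3, ← Real.rpow_mul (abs_nonneg t)]
    norm_num
  rcases lt_trichotomy t 0 with h | h | h
  · have hs : Real.sign t = -1 := Real.sign_of_neg h
    calc (cbrt t)^3 = (Real.sign t)^3 * (|t| ^ ((1:ℝ)/3))^(3:ℕ) := by rw [cbrt]; ring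
    _ = t := by rw [hs, habs, abs_of_neg h]; ring
  · simp [cbrt, h]
  · have hs : Real.sign t = 1 := Real.sign_of_pos h
    calc (cbrt t)^3 = (Real.sign t)^3 * (|t| ^ ((1:ℝ)/3))^(3:ℕ) := by rw [cbrt]; ring
    _ = t := by rw [hs, habs, abs_of_pos h]; ring

lemma cube_inj {a b : ℝ} (h : a ^ 3 = b ^ 3) : a = b :=
  (Odd.strictMono_pow (R := ℝ) (n := 3) (by decide)).injective h

set_option maxHeartbeats 1000000 in
/-- projection of `(x̄, ȳ)` (with `x̄ ≠ 0`, `ȳ ≠ α‖x̄‖²`) onto the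
graph of `t(x) = α‖x‖²` when `Δ ≥ 0`: the singleton `{(w₁·x̄/‖x̄‖, αw₁²)}`. -/
theorem stmt_18 (n : ℕ) (α : ℝ) (hα : 0 < α)
    (xb : EuclideanSpace ℝ (Fin n)) (yb : ℝ) (hx : xb ≠ 0)
    (hy : yb ≠ α * ‖xb‖ ^ 2) (Δ w₁ : ℝ)
    (hΔ : Δ = (1 - 2 * α * yb) ^ 3 / (216 * α ^ 6) + ‖xb‖ ^ 2 / (16 * α ^ 4))
    (hw₁ : w₁ = cbrt (‖xb‖ / (4 * α ^ 2) - Real.sqrt Δ)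
        + cbrt (‖xb‖ / (4 * α ^ 2) + Real.sqrt Δ))
    (hcase : 0 ≤ Δ) :
    {z : EuclideanSpace ℝ (Fin n) × ℝ |
        (∃ x : EuclideanSpace ℝ (Fin n), z = (x, α * ‖x‖ ^ 2)) ∧
        ∀ w : EuclideanSpace ℝ (Fin n),
          Real.sqrt (‖xb - z.1‖ ^ 2 + (yb - z.2) ^ 2) ≤
            Real.sqrt (‖xb - w‖ ^ 2 + (yb - α * ‖w‖ ^ 2) ^ 2)} =
      {((w₁ / ‖xb‖) • xb, α * w₁ ^ 2)} := by
  have hα2 : (0:ℝ) < α ^ 2 := by positivity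
  set N := ‖xb‖ with hNdef
  have hN : 0 < N := norm_pos_iff.mpr hx
  set B := 1 - 2 * α * yb with hBdef
  set s := Real.sqrt Δ with hsdef
  have hs2 : s ^ 2 = Δ := Real.sq_sqrt hcase
  set u := cbrt (N / (4 * α ^ 2) - s) with hudef
  set v := cbrt (N / (4 * α ^ 2) + s) with hvdef
  have hu : u ^ 3 = N / (4 * α ^ 2) - s := cbrt_cube _
  have hv : v ^ 3 = N / (4 * α ^ 2) + s := cbrt_cube _
  have hane : (α:ℝ) ≠ 0 := ne_of_gt hα
  have huv : u * v = -B / (6 * α ^ 2) := by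
    apply cube_inj
    have h1 : (u * v) ^ 3 = u ^ 3 * v ^ 3 := by ring
    rw [h1, hu, hv]
    have h2 : (N / (4 * α ^ 2) - s) * (N / (4 * α ^ 2) + s)
        = N ^ 2 / (16 * α ^ 4) - Δ := by
      rw [← hs2]; field_simp; ring
    rw [h2, hΔ]
    field_simp
    ring
  have key1 : 2 * α ^ 2 * w₁ ^ 3 + B * w₁ = N := by
    rw [hw₁]
    have h3 : (u + v) ^ 3 = u ^ 3 + v ^ 3 + 3 * (u * v) * (u + v) := by ring
    rw [h3, hu, hv, huv]
    field_simp
    ring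
  have key2 : 0 < u ^ 2 - u * v + v ^ 2 := by
    rcases lt_or_eq_of_le (by linarith [sq_nonneg (u - v), sq_nonneg u, sq_nonneg v] :
        (0:ℝ) ≤ u ^ 2 - u * v + v ^ 2) with h | h
    · exact h
    · exfalso
      have hu2 : u ^ 2 ≤ 0 := by linarith [sq_nonneg (u - v), sq_nonneg v]
      have hv2 : v ^ 2 ≤ 0 := by linarith [sq_nonneg (u - v), sq_nonneg u]
      have hu0 : u = 0 := sq_eq_zero_iff.mp (le_antisymm hu2 (sq_nonneg u))
      have hv0 : v = 0 := sq_eq_zero_iff.mp (le_antisymm hv2 (sq_nonneg v))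
      have h1 : (0:ℝ) = N / (4 * α ^ 2) - s := by rw [← hu, hu0]; ring
      have h2 : (0:ℝ) = N / (4 * α ^ 2) + s := by rw [← hv, hv0]; ring
      have h3 : N / (4 * α ^ 2) = 0 := by linarith
      have h4 : N = 0 := by field_simp at h3; simpa using h3
      linarith
  have hQm : 2 * α ^ 2 * w₁ ^ 2 + B = 2 * α ^ 2 * (u ^ 2 - u * v + v ^ 2) := by
    have hB : B = -6 * α ^ 2 * (u * v) := by rw [huv]; field_simp
    rw [hw₁, hB]; ring
  have hQminpos : 0 < 2 * α ^ 2 * w₁ ^ 2 + B := by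
    rw [hQm]
    have := mul_pos (show (0:ℝ) < 2 * α ^ 2 by positivity) key2
    linarith
  have hfact1 : w₁ * (2 * α ^ 2 * w₁ ^ 2 + B) = N := by linear_combination key1
  have hw₁pos : 0 < w₁ := by
    rcases mul_pos_iff.mp (show 0 < w₁ * (2 * α ^ 2 * w₁ ^ 2 + B) by
        rw [hfact1]; exact hN) with ⟨h1, _⟩ | ⟨_, h2⟩
    · exact h1
    · linarith
  have hQpos : ∀ r : ℝ, 0 < α ^ 2 * (r ^ 2 + 2 * w₁ * r + 3 * w₁ ^ 2) + B := by
    intro r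
    have h1 : 0 ≤ α ^ 2 * (r + w₁) ^ 2 := mul_nonneg hα2.le (sq_nonneg _)
    linarith [h1, hQminpos]
  have hfactor : ∀ r : ℝ, (N - r) ^ 2 + (yb - α * r ^ 2) ^ 2
      - ((N - w₁) ^ 2 + (yb - α * w₁ ^ 2) ^ 2)
      = (r - w₁) ^ 2 * (α ^ 2 * (r ^ 2 + 2 * w₁ * r + 3 * w₁ ^ 2) + B) := by
    intro r
    linear_combination (2 * (r - w₁)) * key1
  -- the candidate projection point
  have hxs : ‖(w₁ / N) • xb‖ = w₁ := by
    rw [norm_smul, Real.norm_eq_abs, abs_of_pos (by positivity), ← hNdef,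
      div_mul_cancel₀ _ (ne_of_gt hN)]
  have hdiff : xb - (w₁ / N) • xb = (1 - w₁ / N) • xb := by
    rw [sub_smul, one_smul]
  have hdist : ‖xb - (w₁ / N) • xb‖ ^ 2 = (N - w₁) ^ 2 := by
    rw [hdiff, norm_smul, Real.norm_eq_abs, mul_pow, sq_abs, ← hNdef]
    field_simp
  ext z
  simp only [Set.mem_setOf_eq, Set.mem_singleton_iff]
  constructor
  · rintro ⟨⟨x, rfl⟩, hmin⟩
    have hmin' := hmin ((w₁ / N) • xb)
    simp only at hmin'
    have hA : (0:ℝ) ≤ ‖xb - x‖ ^ 2 + (yb - α * ‖x‖ ^ 2) ^ 2 := by positivity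
    have h1 : ‖xb - x‖ ^ 2 + (yb - α * ‖x‖ ^ 2) ^ 2
        ≤ (N - w₁) ^ 2 + (yb - α * w₁ ^ 2) ^ 2 := by
      have h2 := pow_le_pow_left₀ (Real.sqrt_nonneg _) hmin' 2
      rw [Real.sq_sqrt hA, Real.sq_sqrt (by positivity)] at h2
      rwa [hxs, hdist] at h2
    set r := ‖x‖ with hrdef
    have hip : ⟪xb, x⟫ ≤ N * r := real_inner_le_norm xb x
    have hexp : ‖xb - x‖ ^ 2 = N ^ 2 - 2 * ⟪xb, x⟫ + r ^ 2 := norm_sub_sq_real xb x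
    have hfac := hfactor r
    have hg : (N - r) ^ 2 + (yb - α * r ^ 2) ^ 2
        ≤ (N - w₁) ^ 2 + (yb - α * w₁ ^ 2) ^ 2 := by linarith [hexp, hip, h1]
    have h2 : (r - w₁) ^ 2 * (α ^ 2 * (r ^ 2 + 2 * w₁ * r + 3 * w₁ ^ 2) + B) ≤ 0 := by
      linarith [hfac, hg]
    have hsle : (r - w₁) ^ 2 ≤ 0 := by
      rcases mul_nonpos_iff.mp h2 with ⟨_, hq⟩ | ⟨hs', _⟩
      · linarith [hQpos r]
      · exact hs'
    have hr : r = w₁ := by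
      have h3 : r - w₁ = 0 := sq_eq_zero_iff.mp (le_antisymm hsle (sq_nonneg _))
      linarith
    have hipeq : ⟪xb, x⟫ = N * r := by
      rw [hr] at hexp h1 hip ⊢
      exact le_antisymm hip (by linarith [hexp, h1])
    have hcol : ‖x‖ • xb = ‖xb‖ • x := inner_eq_norm_mul_iff_real.mp hipeq
    have hxval : x = (w₁ / N) • xb := by
      rw [← hrdef, hr, ← hNdef] at hcol
      have h5 : (N⁻¹ : ℝ) • (w₁ • xb) = (N⁻¹ : ℝ) • (N • x) := by rw [hcol]
      rw [smul_smul, smul_smul, inv_mul_cancel₀ (ne_of_gt hN), one_smul] at h5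
      rw [← h5]
      congr 1
      rw [div_eq_mul_inv, mul_comm]
    have h6 : α * ‖x‖ ^ 2 = α * w₁ ^ 2 := by rw [← hrdef, hr]
    rw [hxval, h6]
  · rintro rfl
    refine ⟨⟨(w₁ / N) • xb, by rw [hxs]⟩, ?_⟩
    intro w
    simp only
    apply Real.sqrt_le_sqrt
    rw [hdist]
    have hip : ⟪xb, w⟫ ≤ N * ‖w‖ := real_inner_le_norm xb w
    have hexp : ‖xb - w‖ ^ 2 = N ^ 2 - 2 * ⟪xb, w⟫ + ‖w‖ ^ 2 := norm_sub_sq_real xb w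
    have hfac := hfactor ‖w‖
    have hprod : 0 ≤ (‖w‖ - w₁) ^ 2 * (α ^ 2 * (‖w‖ ^ 2 + 2 * w₁ * ‖w‖ + 3 * w₁ ^ 2) + B) :=
      mul_nonneg (sq_nonneg _) (hQpos ‖w‖).le
    linarith [hprod, hip, hexp, hfac]
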